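/- For all positive integers r, s, t, one has ∏_{i=1}^{t} (r+s+i) ≥ ( ∏_{j=1}^{t−1} (s+j) ) · (s + t + r·t). -/

import Mathlib

open Finset

theorem stmt_14 (r s t : ℕ) (hr : 1 ≤ r) (hs : 1 ≤ s) (ht : 1 ≤ t) :
    (∏ j ∈ Finset.Icc 1 (t - 1), (s + j)) * (s + t + r * t) ≤
      ∏ i ∈ Finset.Icc 1 t, (r + s + i) := by
  induction t, ht using Nat.le_induction with
  | base => simp; omega
  | succ t ht ih =>
    have h1 : ∏ i ∈ Finset.Icc 1 (t + 1), (r + s + i)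
        = (∏ i ∈ Finset.Icc 1 t, (r + s + i)) * (r + s + (t + 1)) :=
      Finset.prod_Icc_succ_top (by omega) _
    have h2 : ∏ j ∈ Finset.Icc 1 (t + 1 - 1), (s + j)
        = (∏ j ∈ Finset.Icc 1 (t - 1), (s + j)) * (s + t) := by
      have : t + 1 - 1 = (t - 1) + 1 := by omega
      rw [this, Finset.prod_Icc_succ_top (by omega)]
      congr 2
      omega
    rw [h1, h2]
    have key : (s + t) * (s + (t + 1) + r * (t + 1)) ≤ (s + t + r * t) * (r + s + (t + 1)) := by
      nlinarith [Nat.mul_le_mul_left (r * t) (show s + t ≤ r + s + (t + 1) by omega)]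
    calc (∏ j ∈ Finset.Icc 1 (t - 1), (s + j)) * (s + t) * (s + (t + 1) + r * (t + 1))
        = (∏ j ∈ Finset.Icc 1 (t - 1), (s + j)) * ((s + t) * (s + (t + 1) + r * (t + 1))) := by ring
      _ ≤ (∏ j ∈ Finset.Icc 1 (t - 1), (s + j)) * ((s + t + r * t) * (r + s + (t + 1))) :=
          Nat.mul_le_mul_left _ key
      _ = (∏ j ∈ Finset.Icc 1 (t - 1), (s + j)) * (s + t + r * t) * (r + s + (t + 1)) := by ring
      _ ≤ (∏ i ∈ Finset.Icc 1 t, (r + s + i)) * (r + s + (t + 1)) :=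
          Nat.mul_le_mul_right _ ih
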